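/- Let X_1, ..., X_n be i.i.d. Bernoulli(p) random variables and f : {0,1}^n → R a function that is 1-Lipschitz with respect to the Hamming distance. Then for all x > 0, P[f(X) - E[f(X)] ≤ -x] ≤ exp(-2x²/n). -/

import Mathlib

open MeasureTheory

section McDiarmidAux
open Real Finset


private lemma expDeriv (c s : ℝ) : HasDerivAt (fun x => Real.exp (c*x)) (c * Real.exp (c*s)) s := by
  simpa [mul_comm] using (HasDerivAt.const_mul c (hasDerivAt_id s)).exp

/-- Hoeffding core: `(1-p) e^{-ps} + p e^{(1-p)s} ≤ e^{s²/8}`. -/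
lemma hoeff_core {p : ℝ} (hp0 : 0 ≤ p) (hp1 : p ≤ 1) (s : ℝ) :
    (1-p) * Real.exp ((-p)*s) + p * Real.exp ((1-p)*s) ≤ Real.exp (s^2/8) := by
  set F : ℝ → ℝ := fun x => (1-p) * Real.exp ((-p)*x) + p * Real.exp ((1-p)*x) with hFdef
  set F₁ : ℝ → ℝ := fun x => p*(1-p)*(Real.exp ((1-p)*x) - Real.exp ((-p)*x)) with hF1def
  have hFpos : ∀ x, 0 < F x := by
    intro x
    have e1 := Real.exp_pos ((-p)*x)
    have e2 := Real.exp_pos ((1-p)*x)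
    rcases eq_or_lt_of_le hp0 with h | h
    · simp only [hFdef, ← h]; simpa using e2
    · have h1 : 0 < p * Real.exp ((1-p)*x) := by positivity
      have h2 : 0 ≤ (1-p) * Real.exp ((-p)*x) := mul_nonneg (by linarith) e1.le
      simp only [hFdef]; linarith
  have hF : ∀ x, HasDerivAt F (F₁ x) x := by
    intro x
    have := ((expDeriv (-p) x).const_mul (1-p)).add ((expDeriv (1-p) x).const_mul p)
    refine this.congr_deriv ?_
    simp only [hF1def]; ring
  have hF1 : ∀ x, HasDerivAt F₁
      (p*(1-p)*((1-p)*Real.exp ((1-p)*x) - (-p)*Real.exp ((-p)*x))) x := by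
    intro x
    exact ((expDeriv (1-p) x).sub (expDeriv (-p) x)).const_mul _
  set g : ℝ → ℝ := fun x => F₁ x / F x with hgdef
  have hg : ∀ x, HasDerivAt g
      ((p*(1-p)*((1-p)*Real.exp ((1-p)*x) - (-p)*Real.exp ((-p)*x)) * F x - F₁ x * F₁ x) / (F x)^2) x :=
    fun x => (hF1 x).div (hF x) (hFpos x).ne'
  -- derivative of g is in [0, 1/4]
  have hgderiv_bound : ∀ x,
      |(p*(1-p)*((1-p)*Real.exp ((1-p)*x) - (-p)*Real.exp ((-p)*x)) * F x - F₁ x * F₁ x) / (F x)^2| ≤ 1/4 := by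
    intro x
    set E₁ := Real.exp ((-p)*x) with hE1
    set E₂ := Real.exp ((1-p)*x) with hE2
    have e1 : 0 < E₁ := Real.exp_pos _
    have e2 : 0 < E₂ := Real.exp_pos _
    have hnum : p*(1-p)*((1-p)*E₂ - (-p)*E₁) * F x - F₁ x * F₁ x = p*(1-p)*E₁*E₂ := by
      simp only [hFdef, hF1def, ← hE1, ← hE2]; ring
    have hden : 4*(p*(1-p)*E₁*E₂) ≤ (F x)^2 := by
      simp only [hFdef, ← hE1, ← hE2]
      nlinarith [sq_nonneg ((1-p)*E₁ - p*E₂)]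
    have hAB : 0 ≤ p*(1-p)*E₁*E₂ :=
      mul_nonneg (mul_nonneg (mul_nonneg hp0 (by linarith)) e1.le) e2.le
    have hF2 : 0 < (F x)^2 := pow_pos (hFpos x) 2
    rw [hnum, abs_div, abs_of_nonneg hAB, abs_of_nonneg hF2.le, div_le_iff₀ hF2]
    nlinarith [hden, sq_nonneg ((1-p)*E₁ - p*E₂)]
  have hg0 : g 0 = 0 := by simp [hgdef, hF1def]
  -- |g x| ≤ |x|/4
  have hgbound : ∀ x, |g x| ≤ |x| / 4 := by
    intro x
    have := Convex.norm_image_sub_le_of_norm_hasDerivWithin_le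
      (f := g) (C := 1/4) (s := Set.univ)
      (fun y _ => (hg y).hasDerivWithinAt) (fun y _ => hgderiv_bound y)
      convex_univ (Set.mem_univ 0) (Set.mem_univ x)
    rw [hg0] at this
    simp only [sub_zero, Real.norm_eq_abs] at this
    linarith
  -- ψ x = x²/8 - log (F x) is minimized at 0
  set ψ : ℝ → ℝ := fun x => x^2/8 - Real.log (F x) with hψdef
  have hψ : ∀ x, HasDerivAt ψ (x/4 - g x) x := by
    intro x
    have h1 : HasDerivAt (fun x : ℝ => x^2/8) (x/4) x := by
      have := (hasDerivAt_pow 2 x).div_const 8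
      refine this.congr_deriv ?_
      norm_num; ring
    exact h1.sub ((hF x).log (hFpos x).ne')
  have hψderiv : ∀ x, deriv ψ x = x/4 - g x := fun x => (hψ x).deriv
  have hψcont : Continuous ψ := by
    have : Differentiable ℝ ψ := fun x => (hψ x).differentiableAt
    exact this.continuous
  have hψ0 : ψ 0 = 0 := by
    simp [hψdef, hFdef]
  have key : 0 ≤ ψ s := by
    rcases le_or_gt 0 s with hs | hs
    · have hmono : MonotoneOn ψ (Set.Ici 0) := by
        apply monotoneOn_of_deriv_nonneg (convex_Ici 0) hψcont.continuousOn
          (fun x _ => (hψ x).differentiableAt.differentiableWithinAt)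
        intro x hx
        rw [interior_Ici] at hx
        rw [hψderiv]
        have := (abs_le.mp (hgbound x)).2
        rw [abs_of_pos hx] at this
        linarith
      have := hmono (Set.self_mem_Ici) (Set.mem_Ici.mpr hs) hs
      linarith [hψ0 ▸ this]
    · have hanti : AntitoneOn ψ (Set.Iic 0) := by
        apply antitoneOn_of_deriv_nonpos (convex_Iic 0) hψcont.continuousOn
          (fun x _ => (hψ x).differentiableAt.differentiableWithinAt)
        intro x hx
        rw [interior_Iic] at hx
        rw [hψderiv]
        have := (abs_le.mp (hgbound x)).1
        rw [abs_of_neg hx] at this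
        linarith
      have := hanti (Set.mem_Iic.mpr hs.le) (Set.self_mem_Iic) hs.le
      linarith [hψ0 ▸ this]
  have hlog : Real.log (F s) ≤ s^2/8 := by
    simp only [hψdef] at key; linarith
  calc F s = Real.exp (Real.log (F s)) := (Real.exp_log (hFpos s)).symm
    _ ≤ Real.exp (s^2/8) := Real.exp_le_exp.mpr hlog


lemma hoeff_two_point {p : ℝ} (hp0 : 0 ≤ p) (hp1 : p ≤ 1) (u v t : ℝ)
    (hd : |v - u| ≤ 1) :
    (1-p) * Real.exp (t*(u - ((1-p)*u + p*v))) + p * Real.exp (t*(v - ((1-p)*u + p*v)))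
      ≤ Real.exp (t^2/8) := by
  set d := v - u with hddef
  set s := t * d with hsdef
  have h1 : t*(u - ((1-p)*u + p*v)) = (-p)*s := by simp only [hsdef, hddef]; ring
  have h2 : t*(v - ((1-p)*u + p*v)) = (1-p)*s := by simp only [hsdef, hddef]; ring
  rw [h1, h2]
  refine (hoeff_core hp0 hp1 s).trans (Real.exp_le_exp.mpr ?_)
  have : s^2 = t^2 * d^2 := by rw [hsdef]; ring
  have hd2 : d^2 ≤ 1 := by
    have := abs_le.mp hd
    nlinarith
  nlinarith [sq_nonneg t]

lemma hamming_cons {n : ℕ} (y y' : Bool) (b b' : Fin n → Bool) :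
    hammingDist (Fin.cons y b) (Fin.cons y' b' : Fin (n+1) → Bool)
      = (if y = y' then 0 else 1) + hammingDist b b' := by
  simp only [hammingDist, Finset.card_filter, Fin.sum_univ_succ, Fin.cons_zero, Fin.cons_succ]
  by_cases h : y = y' <;> simp [h]

lemma sum_cons_split {n : ℕ} (G : (Fin (n+1) → Bool) → ℝ) :
    ∑ a : Fin (n+1) → Bool, G a
      = ∑ y : Bool, ∑ b : Fin n → Bool, G (Fin.cons y b) := by
  calc ∑ a : Fin (n+1) → Bool, G a
      = ∑ q : Bool × (Fin n → Bool), G ((Fin.consEquiv fun _ => Bool) q) :=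
        (Equiv.sum_comp _ G).symm
    _ = ∑ y : Bool, ∑ b : Fin n → Bool, G (Fin.cons y b) := by
        rw [Fintype.sum_prod_type]
        exact Finset.sum_congr rfl fun y _ => Finset.sum_congr rfl fun b _ => by
          simp [Fin.consEquiv]

noncomputable def bW (p : ℝ) : Bool → ℝ := fun b => if b then p else 1 - p

noncomputable def cubeW (p : ℝ) {n : ℕ} (a : Fin n → Bool) : ℝ := ∏ i, bW p (a i)

lemma bW_nonneg {p : ℝ} (hp0 : 0 ≤ p) (hp1 : p ≤ 1) (b : Bool) : 0 ≤ bW p b := by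
  cases b <;> simp [bW] <;> linarith

lemma cubeW_nonneg {p : ℝ} (hp0 : 0 ≤ p) (hp1 : p ≤ 1) {n : ℕ} (a : Fin n → Bool) :
    0 ≤ cubeW p a :=
  Finset.prod_nonneg fun i _ => bW_nonneg hp0 hp1 _

lemma cubeW_cons {p : ℝ} {n : ℕ} (y : Bool) (b : Fin n → Bool) :
    cubeW p (Fin.cons y b) = bW p y * cubeW p b := by
  simp [cubeW, Fin.prod_univ_succ]

lemma sum_cubeW (p : ℝ) : ∀ n : ℕ, ∑ a : Fin n → Bool, cubeW p a = 1 := by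
  intro n
  induction n with
  | zero => simp [cubeW]
  | succ n ih =>
      rw [sum_cons_split (fun a => cubeW p a)]
      simp only [cubeW_cons, ← Finset.mul_sum, ih, Fintype.sum_bool]
      simp [bW]

lemma mgf_bound {p : ℝ} (hp0 : 0 ≤ p) (hp1 : p ≤ 1) :
    ∀ (n : ℕ) (g : (Fin n → Bool) → ℝ),
      (∀ a b, |g a - g b| ≤ (hammingDist a b : ℝ)) →
      (∑ a, cubeW p a * g a = 0) → ∀ t : ℝ,
      ∑ a, cubeW p a * Real.exp (t * g a) ≤ Real.exp (t^2 * n / 8) := by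
  intro n
  induction n with
  | zero =>
      intro g hlip hcent t
      have h1 : ∀ x : Fin 0 → Bool, cubeW p x = 1 := fun x => by simp [cubeW]
      have hg0 : ∀ x : Fin 0 → Bool, g x = 0 := by
        intro x
        rw [Fintype.sum_unique (fun a : Fin 0 → Bool => cubeW p a * g a), h1, one_mul] at hcent
        exact (congrArg g (Subsingleton.elim _ _)).trans hcent
      rw [Fintype.sum_unique (fun a : Fin 0 → Bool => cubeW p a * Real.exp (t * g a)),
        h1, one_mul, hg0]
      simp
  | succ n ih =>
      intro g hlip hcent t
      set h : (Fin n → Bool) → ℝ :=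
        fun b => (1-p) * g (Fin.cons false b) + p * g (Fin.cons true b) with hhdef
      have hlip_h : ∀ b b' : Fin n → Bool, |h b - h b'| ≤ (hammingDist b b' : ℝ) := by
        intro b b'
        have d1 := hlip (Fin.cons false b) (Fin.cons false b')
        have d2 := hlip (Fin.cons true b) (Fin.cons true b')
        rw [hamming_cons] at d1 d2
        simp only [if_pos rfl] at d1 d2
        push_cast at d1 d2 ⊢
        have e1 : h b - h b' = (1-p) * (g (Fin.cons false b) - g (Fin.cons false b'))
            + p * (g (Fin.cons true b) - g (Fin.cons true b')) := by
          simp only [hhdef]; ring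
        rw [e1]
        refine (abs_add_le _ _).trans ?_
        rw [abs_mul, abs_mul, abs_of_nonneg (by linarith : (0:ℝ) ≤ 1-p), abs_of_nonneg hp0]
        nlinarith [abs_nonneg (g (Fin.cons false b) - g (Fin.cons false b')),
          abs_nonneg (g (Fin.cons true b) - g (Fin.cons true b'))]
      have hcent_h : ∑ b, cubeW p b * h b = 0 := by
        have e : ∑ b, cubeW p b * h b = ∑ a : Fin (n+1) → Bool, cubeW p a * g a := by
          rw [sum_cons_split (fun a => cubeW p a * g a), Fintype.sum_bool,
            ← Finset.sum_add_distrib]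
          refine Finset.sum_congr rfl fun b _ => ?_
          simp only [cubeW_cons, hhdef, bW]
          simp; ring
        rw [e, hcent]
      -- the main chain
      have key : ∀ b : Fin n → Bool,
          (1-p) * Real.exp (t * g (Fin.cons false b)) + p * Real.exp (t * g (Fin.cons true b))
            ≤ Real.exp (t^2/8) * Real.exp (t * h b) := by
        intro b
        have hd : |g (Fin.cons true b) - g (Fin.cons false b)| ≤ 1 := by
          have := hlip (Fin.cons true b) (Fin.cons false b)
          rw [hamming_cons] at this
          simpa using this
        have htp := hoeff_two_point hp0 hp1 (g (Fin.cons false b)) (g (Fin.cons true b)) t hd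
        have e1 : t * g (Fin.cons false b)
            = t * (g (Fin.cons false b) - h b) + t * h b := by ring
        have e2 : t * g (Fin.cons true b)
            = t * (g (Fin.cons true b) - h b) + t * h b := by ring
        rw [e1, e2, Real.exp_add, Real.exp_add]
        have hh : h b = (1-p) * g (Fin.cons false b) + p * g (Fin.cons true b) := rfl
        rw [← hh] at htp
        have hepos := Real.exp_pos (t * h b)
        calc (1-p) * (Real.exp (t * (g (Fin.cons false b) - h b)) * Real.exp (t * h b))
              + p * (Real.exp (t * (g (Fin.cons true b) - h b)) * Real.exp (t * h b))
            = ((1-p) * Real.exp (t * (g (Fin.cons false b) - h b))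
              + p * Real.exp (t * (g (Fin.cons true b) - h b))) * Real.exp (t * h b) := by ring
          _ ≤ Real.exp (t^2/8) * Real.exp (t * h b) := by
              apply mul_le_mul_of_nonneg_right _ hepos.le
              exact htp
      calc ∑ a : Fin (n+1) → Bool, cubeW p a * Real.exp (t * g a)
          = ∑ b : Fin n → Bool, cubeW p b *
              ((1-p) * Real.exp (t * g (Fin.cons false b)) + p * Real.exp (t * g (Fin.cons true b))) := by
            rw [sum_cons_split (fun a => cubeW p a * Real.exp (t * g a)), Fintype.sum_bool,
              ← Finset.sum_add_distrib]
            refine Finset.sum_congr rfl fun b _ => ?_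
            simp only [cubeW_cons, bW]
            simp; ring
        _ ≤ ∑ b : Fin n → Bool, cubeW p b * (Real.exp (t^2/8) * Real.exp (t * h b)) := by
            refine Finset.sum_le_sum fun b _ => ?_
            exact mul_le_mul_of_nonneg_left (key b) (cubeW_nonneg hp0 hp1 b)
        _ = Real.exp (t^2/8) * ∑ b : Fin n → Bool, cubeW p b * Real.exp (t * h b) := by
            rw [Finset.mul_sum]; exact Finset.sum_congr rfl fun b _ => by ring
        _ ≤ Real.exp (t^2/8) * Real.exp (t^2 * n / 8) :=
            mul_le_mul_of_nonneg_left (ih h hlip_h hcent_h t) (Real.exp_pos _).le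
        _ = Real.exp (t^2 * (n+1) / 8) := by
            rw [← Real.exp_add]; congr 1; ring
      push_cast
      ring_nf
      try exact le_rfl

lemma finite_tail {p : ℝ} (hp0 : 0 ≤ p) (hp1 : p ≤ 1) (n : ℕ) (hn : 0 < n)
    (f : (Fin n → Bool) → ℝ)
    (hlip : ∀ a b : Fin n → Bool, |f a - f b| ≤ (hammingDist a b : ℝ))
    (x : ℝ) (hx : 0 < x) :
    ∑ a ∈ Finset.univ.filter
        (fun a => f a - (∑ b, cubeW p b * f b) ≤ -x), cubeW p a
      ≤ Real.exp (-2 * x^2 / n) := by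
  classical
  set Ef := ∑ b, cubeW p b * f b with hEf
  set g : (Fin n → Bool) → ℝ := fun a => Ef - f a with hgdef
  have hglip : ∀ a b, |g a - g b| ≤ (hammingDist a b : ℝ) := by
    intro a b
    have := hlip b a
    have e : g a - g b = f b - f a := by simp only [hgdef]; ring
    rwa [e, ← hammingDist_comm]
  have hgcent : ∑ a, cubeW p a * g a = 0 := by
    simp only [hgdef, mul_sub, Finset.sum_sub_distrib, ← Finset.sum_mul, sum_cubeW p n]
    simp [hEf]
  set t : ℝ := 4 * x / n with htdef
  have hnpos : (0:ℝ) < n := Nat.cast_pos.mpr hn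
  have ht : 0 < t := by positivity
  have hmg := mgf_bound hp0 hp1 n g hglip hgcent t
  have step1 : ∑ a ∈ Finset.univ.filter (fun a => f a - Ef ≤ -x), cubeW p a
      ≤ ∑ a ∈ Finset.univ.filter (fun a => f a - Ef ≤ -x),
          cubeW p a * (Real.exp (-(t*x)) * Real.exp (t * g a)) := by
    refine Finset.sum_le_sum fun a ha => ?_
    have hga : x ≤ g a := by
      have := (Finset.mem_filter.mp ha).2
      simp only [hgdef]; linarith
    have h1 : (1:ℝ) ≤ Real.exp (-(t*x)) * Real.exp (t * g a) := by
      rw [← Real.exp_add]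
      have : 0 ≤ -(t*x) + t * g a := by nlinarith
      calc (1:ℝ) = Real.exp 0 := Real.exp_zero.symm
        _ ≤ _ := Real.exp_le_exp.mpr this
    calc cubeW p a = cubeW p a * 1 := (mul_one _).symm
      _ ≤ _ := mul_le_mul_of_nonneg_left h1 (cubeW_nonneg hp0 hp1 a)
  have step2 : ∑ a ∈ Finset.univ.filter (fun a => f a - Ef ≤ -x),
        cubeW p a * (Real.exp (-(t*x)) * Real.exp (t * g a))
      ≤ ∑ a, cubeW p a * (Real.exp (-(t*x)) * Real.exp (t * g a)) := by
    refine Finset.sum_le_sum_of_subset_of_nonneg (Finset.filter_subset _ _) ?_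
    intro a _ _
    have := cubeW_nonneg hp0 hp1 a
    positivity
  have step3 : ∑ a, cubeW p a * (Real.exp (-(t*x)) * Real.exp (t * g a))
      = Real.exp (-(t*x)) * ∑ a, cubeW p a * Real.exp (t * g a) := by
    rw [Finset.mul_sum]
    exact Finset.sum_congr rfl fun a _ => by ring
  have step4 : Real.exp (-(t*x)) * ∑ a, cubeW p a * Real.exp (t * g a)
      ≤ Real.exp (-(t*x)) * Real.exp (t^2 * n / 8) :=
    mul_le_mul_of_nonneg_left hmg (Real.exp_pos _).le
  have step5 : Real.exp (-(t*x)) * Real.exp (t^2 * n / 8) = Real.exp (-2 * x^2 / n) := by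
    rw [← Real.exp_add]
    congr 1
    simp only [htdef]
    field_simp
    ring
  linarith [step1, step2, step3 ▸ step2, step4, step5 ▸ step4]


end McDiarmidAux

/-- McDiarmid's inequality for i.i.d. Bernoulli(p) variables and a
function `f` that is 1-Lipschitz for the Hamming distance:
`P[f(X) - E[f(X)] ≤ -x] ≤ exp(-2x²/n)` for all `x > 0`. -/
theorem stmt8 {Ω : Type*} [MeasurableSpace Ω] (P : Measure Ω) [IsProbabilityMeasure P]
    (n : ℕ) (p : ℝ) (hp0 : 0 ≤ p) (hp1 : p ≤ 1)
    (X : Fin n → Ω → Bool) (hmeas : ∀ i, Measurable (X i))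
    (hindep : ProbabilityTheory.iIndepFun X P)
    (hbern : ∀ i, P {ω | X i ω = true} = ENNReal.ofReal p)
    (f : (Fin n → Bool) → ℝ)
    (hlip : ∀ a b : Fin n → Bool, |f a - f b| ≤ (hammingDist a b : ℝ)) :
    ∀ x : ℝ, 0 < x →
      P {ω | f (fun i => X i ω) - ∫ ω', f (fun i => X i ω') ∂P ≤ -x}
        ≤ ENNReal.ofReal (Real.exp (-2 * x ^ 2 / n)) := by
  classical
  intro x hx
  rcases Nat.eq_zero_or_pos n with hn | hn
  · subst hn
    simp only [Nat.cast_zero, div_zero, Real.exp_zero, ENNReal.ofReal_one]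
    exact prob_le_one
  -- setup
  set T : Ω → (Fin n → Bool) := fun ω i => X i ω with hTdef
  have hT : Measurable T := measurable_pi_lambda _ hmeas
  have hms : ∀ s : Set (Fin n → Bool), MeasurableSet s := fun s =>
    s.to_countable.measurableSet
  have hfm : Measurable f := fun s _ => hms _
  set μ : Measure (Fin n → Bool) := P.map T with hμdef
  have : IsProbabilityMeasure μ := Measure.isProbabilityMeasure_map hT.aemeasurable
  -- singleton masses
  have hsingle : ∀ a : Fin n → Bool, μ {a} = ENNReal.ofReal (cubeW p a) := by
    intro a
    rw [hμdef, Measure.map_apply hT (hms _)]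
    have hpre : T ⁻¹' {a} = ⋂ i, X i ⁻¹' {(a i)} := by
      ext ω
      simp [hTdef, funext_iff]
    rw [hpre, hindep.meas_iInter (fun i => ⟨{a i}, measurableSet_singleton _, rfl⟩)]
    rw [cubeW, ENNReal.ofReal_prod_of_nonneg (fun i _ => bW_nonneg hp0 hp1 _)]
    refine Finset.prod_congr rfl fun i _ => ?_
    have htrue : X i ⁻¹' {true} = {ω | X i ω = true} := by ext ω; simp
    cases hai : a i with
    | true =>
        rw [htrue, hbern i]
        simp [bW]
    | false =>
        have hfalse : X i ⁻¹' {false} = {ω | X i ω = true}ᶜ := by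
          ext ω; simp
        rw [hfalse, measure_compl ?_ (measure_ne_top _ _), hbern i, measure_univ]
        · rw [← ENNReal.ofReal_one, ← ENNReal.ofReal_sub _ hp0]
          simp [bW]
        · rw [← htrue]; exact hmeas i (measurableSet_singleton _)
  -- integral identification
  have hint : ∫ ω', f (fun i => X i ω') ∂P = ∑ a, cubeW p a * f a := by
    have h1 : ∫ ω', f (fun i => X i ω') ∂P = ∫ a, f a ∂μ := by
      rw [hμdef, integral_map hT.aemeasurable hfm.aestronglyMeasurable]
    rw [h1, integral_fintype (Integrable.of_finite)]
    refine Finset.sum_congr rfl fun a _ => ?_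
    rw [measureReal_def, hsingle a, ENNReal.toReal_ofReal (cubeW_nonneg hp0 hp1 a), smul_eq_mul]
  -- event measure
  set Ef := ∑ a, cubeW p a * f a with hEf
  set S : Set (Fin n → Bool) := {a | f a - Ef ≤ -x} with hSdef
  set Sf : Finset (Fin n → Bool) := Finset.univ.filter (fun a => f a - Ef ≤ -x) with hSfdef
  have hevent : {ω | f (fun i => X i ω) - ∫ ω', f (fun i => X i ω') ∂P ≤ -x} = T ⁻¹' S := by
    ext ω
    simp [hSdef, hTdef, hint]
  rw [hevent, ← Measure.map_apply hT (hms S)]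
  have hScoe : S = ⋃ a ∈ Sf, ({a} : Set (Fin n → Bool)) := by
    ext b
    simp [hSdef, hSfdef]
  rw [← hμdef, hScoe, measure_biUnion_finset
    (fun a _ b _ hab => Set.disjoint_singleton.mpr hab) (fun a _ => hms _)]
  have : ∑ a ∈ Sf, μ {a} = ENNReal.ofReal (∑ a ∈ Sf, cubeW p a) := by
    rw [ENNReal.ofReal_sum_of_nonneg (fun a _ => cubeW_nonneg hp0 hp1 a)]
    exact Finset.sum_congr rfl fun a _ => hsingle a
  rw [this]
  exact ENNReal.ofReal_le_ofReal (finite_tail hp0 hp1 n hn f hlip x hx)
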